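/- arXiv:2304.07154 — 4 statements merged into one kernel-verified Lean document; each statement's English description precedes it below -/
import Mathlib

section
/- In C², at most three pairwise mutually unbiased orthonormal bases exist: any collection of pairwise mutually unbiased orthonormal bases of C² has cardinality at most 3. -/
open Matrix BigOperators

/-- any collection of pairwise mutually unbiased orthonormal bases of C²
has cardinality at most 3. -/
theorem at_most_three_mubs_qubit (n : ℕ)
    (B : Fin n → Fin 2 → Fin 2 → ℂ)
    (horth : ∀ k, ∀ i j, star (B k i) ⬝ᵥ B k j = if i = j then (1 : ℂ) else 0)
    (hmub : ∀ k l, k ≠ l → ∀ i j,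
      ‖star (B k i) ⬝ᵥ B l j‖ ^ 2 = 1 / 2) :
    n ≤ 3 := by
  set f : Fin n → EuclideanSpace ℝ (Fin 3) := fun k =>
    (WithLp.equiv 2 (Fin 3 → ℝ)).symm
      ![2 * (B k 0 0 * (starRingEnd ℂ) (B k 0 1)).re,
        2 * (B k 0 0 * (starRingEnd ℂ) (B k 0 1)).im,
        Complex.normSq (B k 0 0) - Complex.normSq (B k 0 1)] with hf
  have hnorm : ∀ k, Complex.normSq (B k 0 0) + Complex.normSq (B k 0 1) = 1 := by
    intro k
    have h := horth k 0 0
    simp [dotProduct, Fin.sum_univ_two] at h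
    have := congrArg Complex.re h
    simpa [Complex.normSq_apply, Complex.mul_re] using this
  have honb : Orthonormal ℝ f := by
    rw [orthonormal_iff_ite]
    intro k l
    by_cases hkl : k = l
    · subst hkl
      simp only [if_pos rfl]
      have h1 := hnorm k
      simp only [hf, PiLp.inner_apply, RCLike.inner_apply, conj_trivial,
        Fin.sum_univ_three, WithLp.equiv_symm_apply, PiLp.toLp_apply]
      simp only [Matrix.cons_val_zero, Matrix.cons_val_one, Matrix.head_cons,
        Matrix.cons_val_two, Matrix.tail_cons]
      simp only [if_true]
      simp only [Complex.normSq_apply, Complex.mul_re, Complex.mul_im,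
        Complex.conj_re, Complex.conj_im] at h1 ⊢
      linear_combination ((B k 0 0).re * (B k 0 0).re + (B k 0 0).im * (B k 0 0).im +
        ((B k 0 1).re * (B k 0 1).re + (B k 0 1).im * (B k 0 1).im) + 1) * h1
    · simp only [if_neg hkl]
      have h1 := hnorm k
      have h2 := hnorm l
      have h3 := hmub k l hkl 0 0
      have h3' : Complex.normSq (star (B k 0) ⬝ᵥ B l 0) = 1 / 2 := by
        rw [← Complex.sq_norm]; exact h3
      simp only [dotProduct, Fin.sum_univ_two, Pi.star_apply, RingHom.id_apply] at h3'
      simp only [hf, PiLp.inner_apply, RCLike.inner_apply, conj_trivial,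
        Fin.sum_univ_three, WithLp.equiv_symm_apply, PiLp.toLp_apply]
      simp only [Matrix.cons_val_zero, Matrix.cons_val_one, Matrix.head_cons,
        Matrix.cons_val_two, Matrix.tail_cons]
      simp only [Complex.normSq_apply, Complex.mul_re, Complex.mul_im,
        Complex.add_re, Complex.add_im, Complex.conj_re, Complex.conj_im,
        Complex.star_def] at h1 h2 h3' ⊢
      linear_combination 2 * h3' - ((B l 0 0).re * (B l 0 0).re +
        (B l 0 0).im * (B l 0 0).im +
        ((B l 0 1).re * (B l 0 1).re + (B l 0 1).im * (B l 0 1).im)) * h1 - h2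
  have hcard := honb.linearIndependent.fintype_card_le_finrank
  simpa using hcard
end

section
/- Any non-steerable two-qubit state satisfies N→(ρ_AB) ≤ √6: if for all projective measurements {Λ_i^a} on A the unnormalized conditional states at B admit a local hidden state decomposition p(a|i) ρ_{B|Λ_i^a} = Σ_λ p_λ p(a|i,λ) σ_B(λ), then Σ_{i,a} p(a|i) C_{M_i}(ρ_{B|Λ_i^a}) ≤ √6 for any MUB triple {M_i} of measurement settings i = 1,2,3. -/
open ComplexOrder Matrix Kronecker BigOperators

/-- l1-norm coherence of a qubit matrix χ in the basis m. -/
noncomputable def cohIn (m : Fin 2 → Fin 2 → ℂ) (χ : Matrix (Fin 2) (Fin 2) ℂ) : ℝ :=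
  ∑ i, ∑ j, if i ≠ j then ‖star (m i) ⬝ᵥ χ.mulVec (m j)‖ else 0

/-- m is an orthonormal basis of C². -/
def ONB (m : Fin 2 → Fin 2 → ℂ) : Prop :=
  ∀ i j, star (m i) ⬝ᵥ m j = if i = j then (1 : ℂ) else 0

/-- B is a triple of mutually unbiased orthonormal bases of C². -/
def MUBtriple (B : Fin 3 → Fin 2 → Fin 2 → ℂ) : Prop :=
  (∀ i, ONB (B i)) ∧
  ∀ i j, i ≠ j → ∀ a b, ‖star (B i a) ⬝ᵥ B j b‖ ^ 2 = 1 / 2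

/-- Unnormalized conditional state of B after outcome |u⟩⟨u| of a measurement on A:
p(u) ρ_{B|u} = Tr_A[(|u⟩⟨u| ⊗ I) ρ (|u⟩⟨u| ⊗ I)]. -/
noncomputable def condB (ρ : Matrix (Fin 2 × Fin 2) (Fin 2 × Fin 2) ℂ)
    (u : Fin 2 → ℂ) : Matrix (Fin 2) (Fin 2) ℂ :=
  Matrix.of fun b b' => ∑ a, ∑ a', (star (u a)) * ρ (a, b) (a', b') * u a'

/-- Σ_{i,a} p(ρ_{B|Λᵢᵃ}) C_{Mᵢ}(ρ_{B|Λᵢᵃ}), written via unnormalized conditional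
states (using the homogeneity p C(σ/p) = C(σ) of the l1-coherence). -/
noncomputable def naqcSum (ρ : Matrix (Fin 2 × Fin 2) (Fin 2 × Fin 2) ℂ)
    (M Λ : Fin 3 → Fin 2 → Fin 2 → ℂ) : ℝ :=
  ∑ i, ∑ a, cohIn (M i) (condB ρ (Λ i a))

/-- The NAQC functional N→, maximized over MUB triples of coherence bases and of
ensemble-generating measurement bases on A. -/
noncomputable def Nfwd (ρ : Matrix (Fin 2 × Fin 2) (Fin 2 × Fin 2) ℂ) : ℝ :=
  sSup {s : ℝ | ∃ M Λ, MUBtriple M ∧ MUBtriple Λ ∧ s = naqcSum ρ M Λ}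

/-- Partial trace over the first qubit. -/
noncomputable def ptraceA (ρ : Matrix (Fin 2 × Fin 2) (Fin 2 × Fin 2) ℂ) :
    Matrix (Fin 2) (Fin 2) ℂ :=
  Matrix.of fun b b' => ∑ a, ρ (a, b) (a, b')

/-- any non-steerable (A → B) two-qubit state, i.e. one admitting a
local hidden state model reproducing all conditional states of projective
measurements on A, satisfies Σ_{i,a} p(a|i) C_{Mᵢ}(ρ_{B|Λᵢᵃ}) ≤ √6 for all MUB
triples, and hence cannot exhibit NAQC. -/



noncomputable def Vb (m : Fin 2 → Fin 2 → ℂ) : Matrix (Fin 2) (Fin 2) ℂ :=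
  Matrix.of fun j k => m k j

lemma Vb_unitary (m : Fin 2 → Fin 2 → ℂ) (hm : ONB m) :
    (Vb m)ᴴ * Vb m = 1 := by
  ext k l
  have := hm k l
  simp only [dotProduct, Pi.star_apply, RCLike.star_def] at this
  simp [Matrix.mul_apply, Vb, conjTranspose_apply, Matrix.one_apply, ← this]

lemma Vb_unitary' (m : Fin 2 → Fin 2 → ℂ) (hm : ONB m) :
    Vb m * (Vb m)ᴴ = 1 := mul_eq_one_comm.mp (Vb_unitary m hm)

lemma tau_apply (σ : Matrix (Fin 2) (Fin 2) ℂ) (m : Fin 2 → Fin 2 → ℂ) (k l : Fin 2) :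
    ((Vb m)ᴴ * σ * Vb m) k l = star (m k) ⬝ᵥ σ.mulVec (m l) := by
  simp [Matrix.mul_apply, Vb, conjTranspose_apply, mulVec, dotProduct,
    Finset.mul_sum, Finset.sum_mul]
  ring

lemma tau_trace (σ : Matrix (Fin 2) (Fin 2) ℂ) (m : Fin 2 → Fin 2 → ℂ) (hm : ONB m) :
    ((Vb m)ᴴ * σ * Vb m).trace = σ.trace := by
  rw [Matrix.trace_mul_cycle, Vb_unitary' m hm, Matrix.one_mul]

lemma tau_trace_sq (σ : Matrix (Fin 2) (Fin 2) ℂ) (m : Fin 2 → Fin 2 → ℂ) (hm : ONB m) :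
    (((Vb m)ᴴ * σ * Vb m) * ((Vb m)ᴴ * σ * Vb m)).trace = (σ * σ).trace := by
  have h1 := Vb_unitary' m hm
  have e : ((Vb m)ᴴ * σ * Vb m) * ((Vb m)ᴴ * σ * Vb m) = (Vb m)ᴴ * (σ * σ) * Vb m := by
    have h2 : (Vb m)ᴴ * σ * Vb m * ((Vb m)ᴴ * σ * Vb m)
        = (Vb m)ᴴ * σ * (Vb m * (Vb m)ᴴ) * σ * Vb m := by noncomm_ring
    rw [h2, h1, Matrix.mul_one]; noncomm_ring
  rw [e, Matrix.trace_mul_cycle, Vb_unitary' m hm, Matrix.one_mul]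

lemma tau_herm (σ : Matrix (Fin 2) (Fin 2) ℂ) (hσ : σ.IsHermitian) (m : Fin 2 → Fin 2 → ℂ) :
    ((Vb m)ᴴ * σ * Vb m).IsHermitian := by
  simp [Matrix.IsHermitian, conjTranspose_mul, hσ.eq, Matrix.mul_assoc]



lemma herm_facts (τ : Matrix (Fin 2) (Fin 2) ℂ) (hτ : τ.IsHermitian) :
    τ 1 0 = starRingEnd ℂ (τ 0 1) ∧ (τ 0 0).im = 0 ∧ (τ 1 1).im = 0 := by
  have h10 := congrFun (congrFun hτ.eq 1) 0
  have h00 := congrFun (congrFun hτ.eq 0) 0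
  have h11 := congrFun (congrFun hτ.eq 1) 1
  simp [conjTranspose_apply] at h10 h00 h11
  refine ⟨h10.symm, ?_, ?_⟩
  · have := congrArg Complex.im h00; simp at this; linarith
  · have := congrArg Complex.im h11; simp at this; linarith

lemma herm_quad (τ : Matrix (Fin 2) (Fin 2) ℂ) (hτ : τ.IsHermitian) (ht : τ.trace = 1) :
    4 * ‖τ 0 1‖ ^ 2 =
      2 * ((τ * τ).trace).re - 1 - ((τ 0 0).re - (τ 1 1).re) ^ 2 := by
  obtain ⟨h10, h00, h11⟩ := herm_facts τ hτ
  have htr : (τ 0 0).re + (τ 1 1).re = 1 := by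
    have := congrArg Complex.re ht
    simpa [Matrix.trace, Fin.sum_univ_two] using this
  have hS : ((τ * τ).trace).re = (τ 0 0).re ^ 2 + (τ 1 1).re ^ 2
      + 2 * ((τ 0 1).re ^ 2 + (τ 0 1).im ^ 2) := by
    simp [Matrix.trace, Matrix.mul_apply, Fin.sum_univ_two, Matrix.diag, h10,
      Complex.add_re, Complex.mul_re, Complex.conj_re, Complex.conj_im, h00, h11]
    ring
  rw [Complex.sq_norm, Complex.normSq_apply, hS]
  nlinarith [htr]

lemma coh_eq (σ : Matrix (Fin 2) (Fin 2) ℂ) (hσ : σ.IsHermitian) (m : Fin 2 → Fin 2 → ℂ) :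
    cohIn m σ = 2 * ‖star (m 0) ⬝ᵥ σ.mulVec (m 1)‖ := by
  have key : star (m 1) ⬝ᵥ σ.mulVec (m 0) = starRingEnd ℂ (star (m 0) ⬝ᵥ σ.mulVec (m 1)) := by
    simp only [dotProduct, mulVec, Fin.sum_univ_two, Pi.star_apply, RCLike.star_def, map_add,
      _root_.map_mul]
    have e01 := congrFun (congrFun hσ.eq 0) 1
    have e10 := congrFun (congrFun hσ.eq 1) 0
    have e00 := congrFun (congrFun hσ.eq 0) 0
    have e11 := congrFun (congrFun hσ.eq 1) 1
    simp [conjTranspose_apply] at e01 e10 e00 e11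
    simp only [e01, e10, e00, e11, Complex.conj_conj]
    ring
  rw [cohIn]
  simp only [Fin.sum_univ_two, ne_eq]
  simp only [not_true_eq_false, zero_ne_one, one_ne_zero, not_false_eq_true, if_true, if_false,
    add_zero, zero_add]
  rw [key, Complex.norm_conj]
  ring


noncomputable def Eg : Matrix (Fin 2) (Fin 2) ℂ := Matrix.of ![![1,0],![0,-1]]

noncomputable def Am (m : Fin 2 → Fin 2 → ℂ) : Matrix (Fin 2) (Fin 2) ℂ :=
  Vb m * Eg * (Vb m)ᴴ

lemma Eg_herm : Egᴴ = Eg := by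
  ext i j; fin_cases i <;> fin_cases j <;> simp [Eg, conjTranspose_apply]

lemma Eg_sq : Eg * Eg = 1 := by
  ext i j; fin_cases i <;> fin_cases j <;>
    simp [Eg, Matrix.mul_apply, Fin.sum_univ_two, Matrix.one_apply]

lemma Eg_trace : Eg.trace = 0 := by
  simp [Eg, Matrix.trace, Fin.sum_univ_two]

lemma Am_herm (m : Fin 2 → Fin 2 → ℂ) : (Am m).IsHermitian := by
  unfold Am Matrix.IsHermitian
  rw [conjTranspose_mul, conjTranspose_mul, conjTranspose_conjTranspose, Eg_herm,
    Matrix.mul_assoc]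

lemma Am_trace (m : Fin 2 → Fin 2 → ℂ) (hm : ONB m) : (Am m).trace = 0 := by
  rw [Am, Matrix.trace_mul_cycle, Vb_unitary m hm, Matrix.one_mul, Eg_trace]

lemma Am_sq (m : Fin 2 → Fin 2 → ℂ) (hm : ONB m) : Am m * Am m = 1 := by
  have h2 : Am m * Am m = Vb m * Eg * ((Vb m)ᴴ * Vb m) * Eg * (Vb m)ᴴ := by
    rw [Am]; noncomm_ring
  rw [h2, Vb_unitary m hm, Matrix.mul_one, Matrix.mul_assoc (Vb m) Eg Eg, Eg_sq,
    Matrix.mul_one, Vb_unitary' m hm]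

lemma trace_sigma_Am (σ : Matrix (Fin 2) (Fin 2) ℂ) (m : Fin 2 → Fin 2 → ℂ) :
    (σ * Am m).trace = ((Vb m)ᴴ * σ * Vb m) 0 0 - ((Vb m)ᴴ * σ * Vb m) 1 1 := by
  have h1 : σ * Am m = (σ * Vb m * Eg) * (Vb m)ᴴ := by rw [Am]; noncomm_ring
  rw [h1, Matrix.trace_mul_comm]
  have h2 : (Vb m)ᴴ * (σ * Vb m * Eg) = ((Vb m)ᴴ * σ * Vb m) * Eg := by noncomm_ring
  rw [h2]
  simp [Matrix.trace, Matrix.mul_apply, Fin.sum_univ_two, Eg, Matrix.diag]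
  ring

lemma W_apply (m m' : Fin 2 → Fin 2 → ℂ) (k l : Fin 2) :
    ((Vb m)ᴴ * Vb m') k l = star (m k) ⬝ᵥ m' l := by
  simp [Matrix.mul_apply, Vb, conjTranspose_apply, dotProduct]

lemma trace_WEWE (W : Matrix (Fin 2) (Fin 2) ℂ)
    (habs : ∀ k l, W k l * starRingEnd ℂ (W k l) = (1/2 : ℂ)) :
    (Wᴴ * Eg * W * Eg).trace = 0 := by
  have e00 := habs 0 0; have e01 := habs 0 1; have e10 := habs 1 0; have e11 := habs 1 1
  simp only [Matrix.trace, Matrix.mul_apply, Fin.sum_univ_two, Matrix.diag,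
    conjTranspose_apply, Eg, Matrix.of_apply, Matrix.cons_val', Matrix.cons_val_zero,
    Matrix.cons_val_one, Matrix.head_cons, Matrix.head_fin_const, Matrix.empty_val',
    Matrix.cons_val_fin_one, RCLike.star_def]
  linear_combination e00 - e01 - e10 + e11

lemma trace_Am_cross (m m' : Fin 2 → Fin 2 → ℂ)
    (hmub : ∀ a b, ‖star (m a) ⬝ᵥ m' b‖ ^ 2 = 1 / 2) :
    (Am m * Am m').trace = 0 := by
  set W := (Vb m)ᴴ * Vb m' with hW
  have h1 : Am m * Am m' = (Vb m * Eg * ((Vb m)ᴴ * Vb m') * Eg) * (Vb m')ᴴ := by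
    rw [Am, Am]; noncomm_ring
  rw [h1, Matrix.trace_mul_comm]
  have h2 : (Vb m')ᴴ * (Vb m * Eg * ((Vb m)ᴴ * Vb m') * Eg)
      = ((Vb m')ᴴ * Vb m) * Eg * ((Vb m)ᴴ * Vb m') * Eg := by noncomm_ring
  rw [h2]
  have h3 : (Vb m')ᴴ * Vb m = Wᴴ := by
    rw [hW, conjTranspose_mul, conjTranspose_conjTranspose]
  rw [h3]
  apply trace_WEWE
  intro k l
  rw [Complex.mul_conj]
  rw [← Complex.sq_norm, hW, W_apply, hmub k l]
  norm_num

lemma traceless_facts (A : Matrix (Fin 2) (Fin 2) ℂ) (hA : A.IsHermitian) (htA : A.trace = 0) :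
    A 1 1 = -A 0 0 := by
  have : A 0 0 + A 1 1 = 0 := by simpa [Matrix.trace, Fin.sum_univ_two] using htA
  linear_combination this

lemma herm_traceless_norm (A : Matrix (Fin 2) (Fin 2) ℂ) (hA : A.IsHermitian)
    (hsq : A * A = 1) :
    (A 0 1).re ^ 2 + (A 0 1).im ^ 2 + (A 0 0).re ^ 2 = 1 := by
  obtain ⟨h10, h00, _⟩ := herm_facts A hA
  have := congrFun (congrFun hsq 0) 0
  simp only [Matrix.mul_apply, Fin.sum_univ_two, Matrix.one_apply_eq] at this
  rw [h10] at this
  have hre := congrArg Complex.re this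
  simp [Complex.add_re, Complex.mul_re, Complex.conj_re, Complex.conj_im, h00] at hre
  nlinarith [hre]

lemma herm_traceless_orth (A B : Matrix (Fin 2) (Fin 2) ℂ)
    (hA : A.IsHermitian) (hB : B.IsHermitian) (htA : A.trace = 0) (htB : B.trace = 0)
    (hcross : (A * B).trace = 0) :
    (A 0 1).re * (B 0 1).re + (A 0 1).im * (B 0 1).im + (A 0 0).re * (B 0 0).re = 0 := by
  obtain ⟨hA10, hA00, _⟩ := herm_facts A hA
  obtain ⟨hB10, hB00, _⟩ := herm_facts B hB
  have hA11 := traceless_facts A hA htA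
  have hB11 := traceless_facts B hB htB
  simp only [Matrix.trace, Matrix.mul_apply, Fin.sum_univ_two, Matrix.diag] at hcross
  rw [hA10, hB10, hA11, hB11] at hcross
  have hre := congrArg Complex.re hcross
  simp [Complex.add_re, Complex.mul_re, Complex.neg_re, Complex.neg_im,
    Complex.conj_re, Complex.conj_im, hA00, hB00] at hre
  nlinarith [hre]

lemma trace_re_expand (σ A : Matrix (Fin 2) (Fin 2) ℂ) (hσ : σ.IsHermitian)
    (hA : A.IsHermitian) (htA : A.trace = 0) :
    ((σ * A).trace).re = (A 0 1).re * (2 * (σ 0 1).re) + (A 0 1).im * (2 * (σ 0 1).im)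
      + (A 0 0).re * ((σ 0 0).re - (σ 1 1).re) := by
  obtain ⟨hA10, hA00, _⟩ := herm_facts A hA
  obtain ⟨hσ10, hσ00, hσ11⟩ := herm_facts σ hσ
  have hA11 := traceless_facts A hA htA
  simp only [Matrix.trace, Matrix.mul_apply, Fin.sum_univ_two, Matrix.diag]
  rw [hA10, hA11, hσ10]
  simp [Complex.add_re, Complex.mul_re, Complex.neg_re, Complex.neg_im,
    Complex.conj_re, Complex.conj_im, hA00, hσ00, hσ11]
  ring

lemma rows_complete (n : Fin 3 → Fin 3 → ℝ)
    (h : ∀ i j, ∑ k, n i k * n j k = if i = j then 1 else 0) :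
    ∀ k l, ∑ i, n i k * n i l = if k = l then 1 else 0 := by
  have hN : (Matrix.of n) * (Matrix.of n)ᵀ = 1 := by
    ext i j
    simpa [Matrix.mul_apply, Matrix.transpose_apply, Matrix.one_apply] using h i j
  have hN2 := mul_eq_one_comm.mp hN
  intro k l
  have := congrFun (congrFun hN2 k) l
  simpa [Matrix.mul_apply, Matrix.transpose_apply, Matrix.one_apply] using this

lemma sum_sq_dot (n : Fin 3 → Fin 3 → ℝ) (r : Fin 3 → ℝ)
    (h : ∀ i j, ∑ k, n i k * n j k = if i = j then 1 else 0) :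
    ∑ i, (∑ k, n i k * r k) ^ 2 = ∑ k, r k ^ 2 := by
  have h' := rows_complete n h
  have h00 := h' 0 0; have h01 := h' 0 1; have h02 := h' 0 2
  have h11 := h' 1 1; have h12 := h' 1 2; have h22 := h' 2 2
  norm_num [Fin.sum_univ_three, Fin.ext_iff] at h00 h01 h02 h11 h12 h22 ⊢
  linear_combination (r 0) ^ 2 * h00 + (r 1) ^ 2 * h11 + (r 2) ^ 2 * h22
    + 2 * r 0 * r 1 * h01 + 2 * r 0 * r 2 * h02 + 2 * r 1 * r 2 * h12

lemma det_re_nonneg (σ : Matrix (Fin 2) (Fin 2) ℂ) (hpsd : σ.PosSemidef) :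
    0 ≤ (σ.det).re ∧ (σ.det).im = 0 := by
  have h := hpsd.1.det_eq_prod_eigenvalues
  have hnn : 0 ≤ ∏ i, hpsd.1.eigenvalues i :=
    Finset.prod_nonneg fun i _ => hpsd.eigenvalues_nonneg i
  rw [h]
  constructor
  · push_cast
    simpa using hnn
  · push_cast
    simp


lemma qubit_compl (σ : Matrix (Fin 2) (Fin 2) ℂ) (hpsd : σ.PosSemidef) (ht : σ.trace = 1)
    (M : Fin 3 → Fin 2 → Fin 2 → ℂ) (hM : MUBtriple M) :
    ∑ i, cohIn (M i) σ ≤ Real.sqrt 6 := by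
  obtain ⟨hONB, hmub⟩ := hM
  have hherm : σ.IsHermitian := hpsd.1
  set S : ℝ := ((σ * σ).trace).re with hS
  set τ : Fin 3 → Matrix (Fin 2) (Fin 2) ℂ := fun i => (Vb (M i))ᴴ * σ * Vb (M i) with hτ
  set c : Fin 3 → ℝ := fun i => ‖τ i 0 1‖ with hc
  set g : Fin 3 → ℝ := fun i => (τ i 0 0).re - (τ i 1 1).re with hg
  have h1 : ∀ i, cohIn (M i) σ = 2 * c i := by
    intro i
    rw [coh_eq σ hherm (M i), hc]
    simp only [hτ]
    rw [tau_apply]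
  have h2 : ∀ i, 4 * c i ^ 2 = 2 * S - 1 - g i ^ 2 := by
    intro i
    have hq := herm_quad (τ i) (tau_herm σ hherm (M i)) (by rw [hτ]; simp only; rw [tau_trace σ (M i) (hONB i), ht])
    rw [hτ] at hq
    simp only at hq
    rw [tau_trace_sq σ (M i) (hONB i)] at hq
    simpa [hc, hg, hτ, hS] using hq
  set n : Fin 3 → Fin 3 → ℝ :=
    fun i => ![(Am (M i) 0 1).re, (Am (M i) 0 1).im, (Am (M i) 0 0).re] with hn
  set r : Fin 3 → ℝ := ![2 * (σ 0 1).re, 2 * (σ 0 1).im, (σ 0 0).re - (σ 1 1).re] with hr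
  have horth : ∀ i j, ∑ k, n i k * n j k = if i = j then 1 else 0 := by
    intro i j
    by_cases hij : i = j
    · subst hij
      rw [if_pos rfl]
      simp only [hn, Fin.sum_univ_three]
      simp only [Matrix.cons_val_zero, Matrix.cons_val_one, Matrix.head_cons,
        Matrix.cons_val_two, Matrix.tail_cons]
      have := herm_traceless_norm (Am (M i)) (Am_herm (M i)) (Am_sq (M i) (hONB i))
      linear_combination this
    · rw [if_neg hij]
      simp only [hn, Fin.sum_univ_three]
      simp only [Matrix.cons_val_zero, Matrix.cons_val_one, Matrix.head_cons,
        Matrix.cons_val_two, Matrix.tail_cons]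
      have := herm_traceless_orth (Am (M i)) (Am (M j)) (Am_herm (M i)) (Am_herm (M j))
        (Am_trace (M i) (hONB i)) (Am_trace (M j) (hONB j))
        (trace_Am_cross (M i) (M j) (fun a b => hmub i j hij a b))
      linear_combination this
  have hgr : ∀ i, g i = ∑ k, n i k * r k := by
    intro i
    have e1 := trace_sigma_Am σ (M i)
    have e2 := trace_re_expand σ (Am (M i)) hherm (Am_herm (M i)) (Am_trace (M i) (hONB i))
    rw [e1] at e2
    simp only [Complex.sub_re] at e2
    simp only [hg, hn, hr, hτ, Fin.sum_univ_three]
    simp only [Matrix.cons_val_zero, Matrix.cons_val_one, Matrix.head_cons,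
      Matrix.cons_val_two, Matrix.tail_cons]
    linarith [e2]
  have hr2 : ∑ k, r k ^ 2 = 2 * S - 1 := by
    have hq := herm_quad σ hherm ht
    rw [Complex.sq_norm, Complex.normSq_apply] at hq
    simp only [hr, Fin.sum_univ_three]
    simp only [Matrix.cons_val_zero, Matrix.cons_val_one, Matrix.head_cons,
      Matrix.cons_val_two, Matrix.tail_cons]
    rw [hS]
    nlinarith [hq]
  have h3 : ∑ i, g i ^ 2 = 2 * S - 1 := by
    calc ∑ i, g i ^ 2 = ∑ i, (∑ k, n i k * r k) ^ 2 :=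
          Finset.sum_congr rfl fun i _ => by rw [hgr i]
      _ = ∑ k, r k ^ 2 := sum_sq_dot n r horth
      _ = 2 * S - 1 := hr2
  have h4 : 2 * S - 1 ≤ 1 := by
    obtain ⟨hdre, _⟩ := det_re_nonneg σ hpsd
    obtain ⟨h10, h00, h11⟩ := herm_facts σ hherm
    have htr : (σ 0 0).re + (σ 1 1).re = 1 := by
      have := congrArg Complex.re ht
      simpa [Matrix.trace, Fin.sum_univ_two] using this
    have hdet : (σ.det).re = (σ 0 0).re * (σ 1 1).re - ((σ 0 1).re ^ 2 + (σ 0 1).im ^ 2) := by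
      rw [Matrix.det_fin_two, h10]
      simp [Complex.sub_re, Complex.mul_re, Complex.conj_re, Complex.conj_im, h00, h11]
      ring
    rw [← hr2]
    simp only [hr, Fin.sum_univ_three]
    simp only [Matrix.cons_val_zero, Matrix.cons_val_one, Matrix.head_cons,
      Matrix.cons_val_two, Matrix.tail_cons]
    nlinarith [hdre, hdet, htr]
  have hcnn : ∀ i, 0 ≤ c i := fun i => norm_nonneg _
  have hsum : 4 * (c 0 ^ 2 + c 1 ^ 2 + c 2 ^ 2) ≤ 2 := by
    have e0 := h2 0; have e1 := h2 1; have e2 := h2 2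
    have h3' : g 0 ^ 2 + g 1 ^ 2 + g 2 ^ 2 = 2 * S - 1 := by
      rw [← h3, Fin.sum_univ_three]
    linarith [sq_nonneg (g 0), sq_nonneg (g 1), sq_nonneg (g 2)]
  rw [Fin.sum_univ_three, h1 0, h1 1, h1 2]
  have hsq6 : Real.sqrt 6 ^ 2 = 6 := Real.sq_sqrt (by norm_num)
  have h6 : (0:ℝ) ≤ Real.sqrt 6 := Real.sqrt_nonneg 6
  nlinarith [sq_nonneg (c 0 - c 1), sq_nonneg (c 0 - c 2), sq_nonneg (c 1 - c 2),
    hsq6, h6, hcnn 0, hcnn 1, hcnn 2, hsum]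



lemma cohIn_convex (m : Fin 2 → Fin 2 → ℂ) {k : ℕ} (c : Fin k → ℝ) (hc : ∀ l, 0 ≤ c l)
    (χ : Fin k → Matrix (Fin 2) (Fin 2) ℂ) :
    cohIn m (∑ l, ((c l : ℝ) : ℂ) • χ l) ≤ ∑ l, c l * cohIn m (χ l) := by
  have key : ∀ i j : Fin 2, star (m i) ⬝ᵥ (∑ l, ((c l : ℝ) : ℂ) • χ l).mulVec (m j)
      = ∑ l, ((c l : ℝ) : ℂ) * (star (m i) ⬝ᵥ (χ l).mulVec (m j)) := by
    intro i j
    simp only [dotProduct, mulVec, Fin.sum_univ_two, Matrix.sum_apply, Matrix.smul_apply,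
      smul_eq_mul, Pi.star_apply, RCLike.star_def, Finset.mul_sum, Finset.sum_mul]
    simp only [mul_add, Finset.mul_sum]
    rw [← Finset.sum_add_distrib, ← Finset.sum_add_distrib, ← Finset.sum_add_distrib]
    apply Finset.sum_congr rfl; intros; ring
  have step1 : ∀ i j : Fin 2,
      (if i ≠ j then ‖star (m i) ⬝ᵥ (∑ l, ((c l : ℝ) : ℂ) • χ l).mulVec (m j)‖ else 0)
      ≤ ∑ l, c l * (if i ≠ j then ‖star (m i) ⬝ᵥ (χ l).mulVec (m j)‖ else 0) := by
    intro i j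
    by_cases hij : i ≠ j
    · simp only [if_pos hij]
      rw [key i j]
      calc ‖∑ l, ((c l : ℝ) : ℂ) * (star (m i) ⬝ᵥ (χ l).mulVec (m j))‖
          ≤ ∑ l, ‖((c l : ℝ) : ℂ) * (star (m i) ⬝ᵥ (χ l).mulVec (m j))‖ :=
            norm_sum_le _ _
        _ = ∑ l, c l * ‖star (m i) ⬝ᵥ (χ l).mulVec (m j)‖ := by
            apply Finset.sum_congr rfl; intro l _
            rw [norm_mul, Complex.norm_real, Real.norm_of_nonneg (hc l)]
    · simp [hij]
  calc cohIn m (∑ l, ((c l : ℝ) : ℂ) • χ l)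
      ≤ ∑ i, ∑ j, ∑ l, c l * (if i ≠ j then ‖star (m i) ⬝ᵥ (χ l).mulVec (m j)‖ else 0) := by
        rw [cohIn]
        apply Finset.sum_le_sum; intro i _
        apply Finset.sum_le_sum; intro j _
        exact step1 i j
    _ = ∑ l, c l * cohIn m (χ l) := by
        simp only [Fin.sum_univ_two]
        rw [← Finset.sum_add_distrib, ← Finset.sum_add_distrib, ← Finset.sum_add_distrib]
        apply Finset.sum_congr rfl; intro l _
        rw [cohIn]
        simp only [Fin.sum_univ_two]
        ring

theorem non_steerable_no_naqc (ρ : Matrix (Fin 2 × Fin 2) (Fin 2 × Fin 2) ℂ)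
    (hρ : ρ.PosSemidef ∧ ρ.trace = 1)
    (n : ℕ) (pl : Fin n → ℝ) (hpl : ∀ l, 0 ≤ pl l) (hplsum : ∑ l, pl l = 1)
    (σB : Fin n → Matrix (Fin 2) (Fin 2) ℂ)
    (hσB : ∀ l, (σB l).PosSemidef ∧ (σB l).trace = 1)
    (hLHS : ∀ m : Fin 2 → Fin 2 → ℂ, ONB m →
      ∃ q : Fin 2 → Fin n → ℝ, (∀ a l, 0 ≤ q a l) ∧ (∀ l, ∑ a, q a l = 1) ∧
        ∀ a, condB ρ (m a) = ∑ l, ((pl l * q a l : ℝ) : ℂ) • σB l) :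
    ∀ M Λ, MUBtriple M → MUBtriple Λ → naqcSum ρ M Λ ≤ Real.sqrt 6 := by
  intro M Λ hM hΛ
  have h := fun i : Fin 3 => hLHS (Λ i) (hΛ.1 i)
  choose q hq1 hq2 hq3 using h
  rw [naqcSum]
  calc ∑ i, ∑ a, cohIn (M i) (condB ρ (Λ i a))
      ≤ ∑ i, ∑ a, ∑ l, (pl l * q i a l) * cohIn (M i) (σB l) := by
        apply Finset.sum_le_sum; intro i _
        apply Finset.sum_le_sum; intro a _
        rw [hq3 i a]
        exact cohIn_convex (M i) (fun l => pl l * q i a l)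
          (fun l => mul_nonneg (hpl l) (hq1 i a l)) σB
    _ = ∑ l, pl l * ∑ i, cohIn (M i) (σB l) := by
        have hin : ∀ i : Fin 3, ∑ a, ∑ l, (pl l * q i a l) * cohIn (M i) (σB l)
            = ∑ l, pl l * cohIn (M i) (σB l) := by
          intro i
          rw [Finset.sum_comm]
          apply Finset.sum_congr rfl; intro l _
          calc ∑ a, (pl l * q i a l) * cohIn (M i) (σB l)
              = (pl l * cohIn (M i) (σB l)) * ∑ a, q i a l := by
                rw [Finset.mul_sum]
                apply Finset.sum_congr rfl; intro a _; ring
            _ = pl l * cohIn (M i) (σB l) := by rw [hq2 i l, mul_one]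
        calc ∑ i, ∑ a, ∑ l, (pl l * q i a l) * cohIn (M i) (σB l)
            = ∑ i, ∑ l, pl l * cohIn (M i) (σB l) := Finset.sum_congr rfl fun i _ => hin i
          _ = ∑ l, ∑ i, pl l * cohIn (M i) (σB l) := Finset.sum_comm
          _ = ∑ l, pl l * ∑ i, cohIn (M i) (σB l) := by
              apply Finset.sum_congr rfl; intro l _; rw [Finset.mul_sum]
    _ ≤ ∑ l, pl l * Real.sqrt 6 := by
        apply Finset.sum_le_sum; intro l _
        exact mul_le_mul_of_nonneg_left
          (qubit_compl (σB l) (hσB l).1 (hσB l).2 M hM) (hpl l)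
    _ = Real.sqrt 6 := by rw [← Finset.sum_mul, hplsum, one_mul]
end

section
/- For the maximally entangled state |φ⁺⟩ = (|00⟩+|11⟩)/√2, measuring subsystem A in the eigenbasis of σ_x (resp. σ_y, σ_z) produces conditional states at B that are eigenstates of σ_x (resp. σ_y transposed, σ_z); consequently, choosing measurement bases {σ_x, σ_y, σ_z} on A and coherence bases M_1, M_2, M_3 each mutually unbiased to the corresponding conditional states' basis, the sum of average coherences Σ_{i,a} p(a|i) C_{M_i}(ρ_{B|i,a}) attains the value 3 > √6, so |φ⁺⟩ exhibits NAQC. -/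
set_option maxHeartbeats 1000000

open ComplexOrder Matrix Kronecker BigOperators

/-- The eigenbases of σ_x, σ_y, σ_z. -/
noncomputable def pauliBases : Fin 3 → Fin 2 → Fin 2 → ℂ :=
  ![![![1 / (Real.sqrt 2 : ℂ), 1 / (Real.sqrt 2 : ℂ)],
      ![1 / (Real.sqrt 2 : ℂ), -(1 / (Real.sqrt 2 : ℂ))]],
    ![![1 / (Real.sqrt 2 : ℂ), Complex.I / (Real.sqrt 2 : ℂ)],
      ![1 / (Real.sqrt 2 : ℂ), -(Complex.I / (Real.sqrt 2 : ℂ))]],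
    ![![(1 : ℂ), 0], ![(0 : ℂ), 1]]]

/-- The maximally entangled state |φ⁺⟩⟨φ⁺|, |φ⁺⟩ = (|00⟩+|11⟩)/√2. -/
noncomputable def rhoPhiPlus : Matrix (Fin 2 × Fin 2) (Fin 2 × Fin 2) ℂ :=
  Matrix.of fun p q => if p.1 = p.2 ∧ q.1 = q.2 then (1 / 2 : ℂ) else 0

lemma hs' : ((Real.sqrt 2 : ℂ)) * (Real.sqrt 2 : ℂ) = 2 := by
  rw [← Complex.ofReal_mul, Real.mul_self_sqrt (by norm_num)]; norm_num
lemma hs2' : ((Real.sqrt 2 : ℂ)) ^ 2 = 2 := by rw [sq, hs']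
lemma hs4' : ((Real.sqrt 2 : ℂ)) ^ 4 = 4 := by
  rw [show (4:ℕ)=2*2 from rfl, pow_mul, hs2']; norm_num
lemma hns' : (Real.sqrt 2 : ℂ) ≠ 0 := by
  simp [Complex.ofReal_ne_zero, Real.sqrt_ne_zero']
lemma hinv2' : ((Real.sqrt 2 : ℂ))⁻¹ ^ 2 = 1/2 := by rw [inv_pow, hs2']; norm_num
lemma hinv4' : ((Real.sqrt 2 : ℂ))⁻¹ ^ 4 = 1/4 := by rw [inv_pow, hs4']; norm_num

lemma abs_sq_eq' (z : ℂ) (c : ℝ) (h : z * (starRingEnd ℂ) z = (c:ℂ)) :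
    ‖z‖ ^ 2 = c := by
  rw [Complex.sq_norm]
  have h2 := Complex.mul_conj z
  rw [h2] at h
  exact_mod_cast h

lemma mub_pauli : MUBtriple pauliBases := by
  constructor
  · intro i
    fin_cases i <;> intro a b <;> fin_cases a <;> fin_cases b <;>
      (simp [pauliBases, dotProduct, Fin.sum_univ_two, Complex.conj_ofReal, map_div₀,
        Complex.conj_I];
       (try field_simp [hns']); (try ring_nf); (try simp only [hs2', hs4', Complex.I_sq]);
       (try norm_num))
  · intro i j hij a b
    fin_cases i <;> fin_cases j <;> (try exact absurd rfl hij) <;>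
      fin_cases a <;> fin_cases b <;>
      (apply abs_sq_eq'; push_cast;
       simp [pauliBases, dotProduct, Fin.sum_univ_two, Complex.conj_ofReal,
        map_div₀, Complex.conj_I];
       (try field_simp [hns']); (try ring_nf); (try simp only [hs2', hs4', Complex.I_sq]);
       (try norm_num))

lemma condB_phi (u : Fin 2 → ℂ) : condB rhoPhiPlus u
    = (1 / 2 : ℂ) • Matrix.of (fun b b' => star (u b) * u b') := by
  ext b b'
  fin_cases b <;> fin_cases b' <;>
    simp [condB, rhoPhiPlus, Fin.sum_univ_two] <;> ring

noncomputable def Mcoh : Fin 3 → Fin 2 → Fin 2 → ℂ :=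
  ![pauliBases 2, pauliBases 0, pauliBases 1]

lemma mub_Mcoh : MUBtriple Mcoh := by
  have h1 := mub_pauli.1
  have h2 := mub_pauli.2
  constructor
  · intro i
    fin_cases i
    · exact h1 2
    · exact h1 0
    · exact h1 1
  · intro i j hij a b
    fin_cases i <;> fin_cases j <;> (try exact absurd rfl hij)
    · exact h2 2 0 (by decide) a b
    · exact h2 2 1 (by decide) a b
    · exact h2 0 2 (by decide) a b
    · exact h2 0 1 (by decide) a b
    · exact h2 1 2 (by decide) a b
    · exact h2 1 0 (by decide) a b

lemma coh_val : ∀ i a, cohIn (Mcoh i) (condB rhoPhiPlus (pauliBases i a)) = 1/2 := by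
  intro i a
  rw [condB_phi]
  fin_cases i <;> fin_cases a <;>
    (simp [cohIn, Mcoh, pauliBases, dotProduct, mulVec, Fin.sum_univ_two,
      Complex.conj_ofReal, map_div₀, Complex.conj_I, Fin.isValue];
     (try ring_nf);
     (try simp only [hinv2', hinv4', Complex.I_sq]);
     (try ring_nf);
     (try norm_num [_root_.map_mul, Complex.norm_I, map_div₀]))

/-- |φ⁺⟩ exhibits NAQC.  Measuring A in a Pauli eigenbasis leaves B in
(half of) the corresponding pure conditional state (conjugated Pauli eigenstates;
for σ_z these are the σ_z eigenstates), and there is a choice of coherence MUB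
triple M for which the sum of average coherences over the Pauli measurement bases
equals 3 > √6. -/
theorem phi_plus_exhibits_naqc :
    MUBtriple pauliBases ∧
    (∀ i a, condB rhoPhiPlus (pauliBases i a)
        = (1 / 2 : ℂ) • Matrix.of (fun b b' =>
            star (pauliBases i a b) * pauliBases i a b')) ∧
    condB rhoPhiPlus (pauliBases 2 0) = !![(1 / 2 : ℂ), 0; 0, 0] ∧
    condB rhoPhiPlus (pauliBases 2 1) = !![(0 : ℂ), 0; 0, (1 / 2 : ℂ)] ∧
    (∃ M, MUBtriple M ∧ naqcSum rhoPhiPlus M pauliBases = 3) ∧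
    Real.sqrt 6 < 3 := by
  refine ⟨mub_pauli, fun i a => condB_phi _, ?_, ?_, ⟨Mcoh, mub_Mcoh, ?_⟩, ?_⟩
  · rw [condB_phi]
    ext b b'
    fin_cases b <;> fin_cases b' <;> simp [pauliBases] <;> norm_num
  · rw [condB_phi]
    ext b b'
    fin_cases b <;> fin_cases b' <;> simp [pauliBases] <;> norm_num
  · simp [naqcSum, Fin.sum_univ_three, Fin.sum_univ_two, coh_val]
    try norm_num
  · have h := Real.sqrt_lt_sqrt (by norm_num : (0:ℝ) ≤ 6) (by norm_num : (6:ℝ) < 9)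
    rwa [show Real.sqrt 9 = 3 by
      rw [show (9:ℝ) = 3^2 by norm_num, Real.sqrt_sq (by norm_num)]] at h
end

section
/- For any set of three orthonormal bases {M_i}_{i=1,2,3} of C² forming mutually unbiased bases, there exists a unitary W on C² and a phase-relabelling such that M_1, M_2, M_3 are (up to reordering and phases of basis vectors) W-conjugates of the eigenbases of σ_z, σ_x, σ_y; i.e., every MUB triple in C² is unitarily equivalent to the Pauli eigenbases. -/
open ComplexOrder Matrix Kronecker BigOperators

/-- The eigenbases of σ_z, σ_x, σ_y (in this order). -/
noncomputable def pauliZXY : Fin 3 → Fin 2 → Fin 2 → ℂ :=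
  ![![![(1 : ℂ), 0], ![(0 : ℂ), 1]],
    ![![1 / (Real.sqrt 2 : ℂ), 1 / (Real.sqrt 2 : ℂ)],
      ![1 / (Real.sqrt 2 : ℂ), -(1 / (Real.sqrt 2 : ℂ))]],
    ![![1 / (Real.sqrt 2 : ℂ), Complex.I / (Real.sqrt 2 : ℂ)],
      ![1 / (Real.sqrt 2 : ℂ), -(Complex.I / (Real.sqrt 2 : ℂ))]]]

lemma onb_complete {m : Fin 2 → Fin 2 → ℂ} (hm : ONB m) (v : Fin 2 → ℂ) (x : Fin 2) :
    v x = ∑ b, (star (m b) ⬝ᵥ v) * m b x := by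
  classical
  set P : Matrix (Fin 2) (Fin 2) ℂ := Matrix.of fun x b => m b x with hP
  set Q : Matrix (Fin 2) (Fin 2) ℂ := Matrix.of fun b x => star (m b x) with hQ
  have hQP : Q * P = 1 := by
    ext b b'
    simpa [Matrix.mul_apply, Matrix.one_apply, dotProduct, hP, hQ] using hm b b'
  have hPQ : P * Q = 1 := mul_eq_one_comm.mp hQP
  have h1 : (P * Q).mulVec v = v := by rw [hPQ, Matrix.one_mulVec]
  calc v x = ((P * Q).mulVec v) x := by rw [h1]
    _ = ∑ b, (star (m b) ⬝ᵥ v) * m b x := by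
        simp only [Matrix.mulVec, Matrix.mul_apply, dotProduct, hP, hQ, Matrix.of_apply,
          Finset.sum_mul, Finset.mul_sum, Pi.star_apply]
        rw [Finset.sum_comm]
        exact Finset.sum_congr rfl fun b _ => Finset.sum_congr rfl fun y _ => by ring

lemma inner_coeff {m : Fin 2 → Fin 2 → ℂ} (hm : ONB m) (v w : Fin 2 → ℂ) (a b c d : ℂ)
    (hv : ∀ x, v x = a * m 0 x + b * m 1 x)
    (hw : ∀ x, w x = c * m 0 x + d * m 1 x) :
    star v ⬝ᵥ w = (starRingEnd ℂ) a * c + (starRingEnd ℂ) b * d := by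
  have h00 := hm 0 0; have h01 := hm 0 1; have h10 := hm 1 0; have h11 := hm 1 1
  simp only [dotProduct, Fin.sum_univ_two, Pi.star_apply, ite_true, ite_false, reduceIte,
    Fin.isValue, show ((0:Fin 2) = 1) = False by simp,
    show ((1:Fin 2) = 0) = False by simp, show ((0:Fin 2) = 0) = True by simp,
    show ((1:Fin 2) = 1) = True by simp, Complex.star_def] at h00 h01 h10 h11 ⊢
  rw [hv 0, hv 1, hw 0, hw 1]
  simp only [map_add, _root_.map_mul]
  linear_combination ((starRingEnd ℂ) a * c) * h00 + ((starRingEnd ℂ) a * d) * h01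
    + ((starRingEnd ℂ) b * c) * h10 + ((starRingEnd ℂ) b * d) * h11

lemma qubit_orth_classify (p q : ℂ) (hp : Complex.normSq p = 1/2)
    (hq : Complex.normSq q = 1/2) (hpq : Complex.normSq (p + q) = 1) :
    q = Complex.I * p ∨ q = -(Complex.I * p) := by
  have hprod : Complex.normSq (q - Complex.I * p) * Complex.normSq (q + Complex.I * p) = 0 := by
    simp only [Complex.normSq_apply, Complex.add_re, Complex.add_im, Complex.sub_re,
      Complex.sub_im, Complex.mul_re, Complex.mul_im, Complex.I_re, Complex.I_im] at *
    nlinarith [hp, hq, hpq]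
  rcases mul_eq_zero.mp hprod with h | h
  · left; exact sub_eq_zero.mp (Complex.normSq_eq_zero.mp h)
  · right; exact eq_neg_of_add_eq_zero_left (Complex.normSq_eq_zero.mp h)

/-- every MUB triple in C² is unitarily equivalent — up to a
reordering of the bases, reordering of the vectors within each basis, and phases
of the basis vectors — to the Pauli eigenbases of σ_z, σ_x, σ_y. -/
theorem mub_triple_unitarily_pauli (M : Fin 3 → Fin 2 → Fin 2 → ℂ)
    (hM : MUBtriple M) :
    ∃ W : Matrix (Fin 2) (Fin 2) ℂ, W ∈ Matrix.unitaryGroup (Fin 2) ℂ ∧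
      ∃ (π : Equiv.Perm (Fin 3)) (τ : Fin 3 → Equiv.Perm (Fin 2))
        (phase : Fin 3 → Fin 2 → ℂ),
        (∀ i a, ‖phase i a‖ = 1) ∧
        ∀ i a, M i a = phase i a • W.mulVec (pauliZXY (π i) (τ i a)) := by
  obtain ⟨honb, hub⟩ := hM
  have hu : ONB (M 0) := honb 0
  set c : Fin 3 → Fin 2 → Fin 2 → ℂ := fun i a b => star (M 0 b) ⬝ᵥ M i a with hc_def
  have hexp : ∀ i a x, M i a x = c i a 0 * M 0 0 x + c i a 1 * M 0 1 x := by
    intro i a x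
    simpa [Fin.sum_univ_two, hc_def] using onb_complete hu (M i a) x
  have hns : ∀ i, i ≠ 0 → ∀ a b, Complex.normSq (c i a b) = 1/2 := by
    intro i hi a b
    have := hub 0 i (Ne.symm hi) b a
    rwa [Complex.sq_norm] at this
  have hinner : ∀ i a j b, star (M i a) ⬝ᵥ M j b
      = (starRingEnd ℂ) (c i a 0) * c j b 0 + (starRingEnd ℂ) (c i a 1) * c j b 1 :=
    fun i a j b => inner_coeff hu _ _ _ _ _ _ (hexp i a) (hexp j b)
  have hnz : ∀ i, i ≠ 0 → ∀ a b, c i a b ≠ 0 := by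
    intro i hi a b h
    have := hns i hi a b
    rw [h, map_zero] at this; norm_num at this
  have hc100 : c 1 0 0 ≠ 0 := hnz 1 (by decide) 0 0
  obtain ⟨z, hzns, hz⟩ : ∃ z : ℂ, Complex.normSq z = 1 ∧ c 1 0 1 = z * c 1 0 0 := by
    refine ⟨c 1 0 1 / c 1 0 0, ?_, (div_mul_cancel₀ _ hc100).symm⟩
    rw [Complex.normSq_div, hns 1 (by decide) 0 1, hns 1 (by decide) 0 0]
    norm_num
  have hzz : (starRingEnd ℂ) z * z = 1 := by
    have := Complex.normSq_eq_conj_mul_self (z := z)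
    rw [hzns] at this
    exact_mod_cast this.symm
  -- the unitary W
  set W : Matrix (Fin 2) (Fin 2) ℂ :=
    Matrix.of (fun x a => (if a = 0 then (1:ℂ) else z) * M 0 a x) with hW_def
  have hWu : W ∈ Matrix.unitaryGroup (Fin 2) ℂ := by
    rw [Matrix.mem_unitaryGroup_iff']
    ext a a'
    have key : (star W * W) a a'
        = (starRingEnd ℂ) (if a = 0 then (1:ℂ) else z) * (if a' = 0 then (1:ℂ) else z)
          * (star (M 0 a) ⬝ᵥ M 0 a') := by
      simp only [Matrix.mul_apply, Matrix.star_apply, Matrix.conjTranspose_apply, hW_def,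
        Matrix.of_apply, dotProduct, Pi.star_apply, Finset.mul_sum, star_mul',
        Complex.star_def, _root_.map_mul]
      exact Finset.sum_congr rfl fun y _ => by ring
    rw [key, hu a a']
    fin_cases a <;> fin_cases a' <;> simp [Matrix.one_apply, hzz]
  have hWmul : ∀ v : Fin 2 → ℂ, ∀ x, W.mulVec v x = v 0 * M 0 0 x + z * (v 1 * M 0 1 x) := by
    intro v x
    simp only [Matrix.mulVec, dotProduct, Fin.sum_univ_two, hW_def, Matrix.of_apply]
    norm_num; ring
  -- basis-1 relations
  have o1 : (starRingEnd ℂ) (c 1 0 0) * c 1 1 0 + (starRingEnd ℂ) (c 1 0 1) * c 1 1 1 = 0 := by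
    have h := honb 1 0 1
    rw [hinner 1 0 1 1] at h
    simpa using h
  have hsz : (starRingEnd ℂ) (c 1 0 1) = (starRingEnd ℂ) z * (starRingEnd ℂ) (c 1 0 0) := by
    rw [hz, _root_.map_mul]
  have hc111 : c 1 1 1 = -(z * c 1 1 0) := by
    have hsc : (starRingEnd ℂ) (c 1 0 0) ≠ 0 := by
      simpa using hc100
    apply mul_left_cancel₀ hsc
    rw [hsz] at o1
    linear_combination z * o1 - ((starRingEnd ℂ) (c 1 0 0) * c 1 1 1) * hzz
  -- basis-2 classification
  have hnp : Complex.normSq (c 2 0 0) = 1/2 := hns 2 (by decide) 0 0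
  have hnq : Complex.normSq (c 2 0 1 * (starRingEnd ℂ) z) = 1/2 := by
    rw [Complex.normSq_mul, hns 2 (by decide) 0 1, Complex.normSq_conj, hzns]
    norm_num
  have h3 : Complex.normSq (c 2 0 0 + c 2 0 1 * (starRingEnd ℂ) z) = 1 := by
    have h := hub 1 2 (by decide) 0 0
    rw [Complex.sq_norm, hinner 1 0 2 0] at h
    have e : (starRingEnd ℂ) (c 1 0 0) * c 2 0 0 + (starRingEnd ℂ) (c 1 0 1) * c 2 0 1
        = (starRingEnd ℂ) (c 1 0 0) * (c 2 0 0 + c 2 0 1 * (starRingEnd ℂ) z) := by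
      rw [hsz]; ring
    rw [e, Complex.normSq_mul, Complex.normSq_conj, hns 1 (by decide) 0 0] at h
    linarith
  have o2 : (starRingEnd ℂ) (c 2 0 0) * c 2 1 0 + (starRingEnd ℂ) (c 2 0 1) * c 2 1 1 = 0 := by
    have h := honb 2 0 1
    rw [hinner 2 0 2 1] at h
    simpa using h
  have hc200 : c 2 0 0 ≠ 0 := hnz 2 (by decide) 0 0
  have hsc200 : (starRingEnd ℂ) (c 2 0 0) ≠ 0 := by simpa using hc200
  -- s = sqrt 2 facts
  set s : ℂ := (Real.sqrt 2 : ℂ) with hs_def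
  have hsnormSq : Complex.normSq s = 2 := by
    rw [hs_def, Complex.normSq_ofReal, Real.mul_self_sqrt (by norm_num)]
  have hsne : s ≠ 0 := by
    rw [hs_def]
    simp only [ne_eq, Complex.ofReal_eq_zero]
    positivity
  have habs2 : ∀ w : ℂ, Complex.normSq w = 1/2 → ‖w * s‖ = 1 := by
    intro w hw
    rw [Complex.norm_def, Complex.normSq_mul, hw, hsnormSq]
    norm_num
  have habz : ‖(starRingEnd ℂ) z‖ = 1 := by
    rw [Complex.norm_def, Complex.normSq_conj, hzns, Real.sqrt_one]
  rcases qubit_orth_classify (c 2 0 0) (c 2 0 1 * (starRingEnd ℂ) z) hnp hnq h3 with hE | hE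
  case inl =>
    -- c 2 0 1 * conj z = I * c 2 0 0
    have hc201 : c 2 0 1 = Complex.I * c 2 0 0 * z := by
      linear_combination z * hE - c 2 0 1 * hzz
    have hsc201 : (starRingEnd ℂ) (c 2 0 1)
        = -(Complex.I * (starRingEnd ℂ) (c 2 0 0) * (starRingEnd ℂ) z) := by
      rw [hc201]; simp only [_root_.map_mul, map_neg, Complex.conj_I]; ring
    have hc211 : c 2 1 1 = -(Complex.I * c 2 1 0 * z) := by
      apply mul_left_cancel₀ hsc200
      rw [hsc201] at o2
      linear_combination Complex.I * z * o2
        + (z * (starRingEnd ℂ) z * (starRingEnd ℂ) (c 2 0 0) * c 2 1 1) * Complex.I_mul_I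
        - ((starRingEnd ℂ) (c 2 0 0) * c 2 1 1) * hzz
    refine ⟨W, hWu, Equiv.refl _, fun _ => Equiv.refl _,
      ![![1, (starRingEnd ℂ) z], ![c 1 0 0 * s, c 1 1 0 * s], ![c 2 0 0 * s, c 2 1 0 * s]],
      ?_, ?_⟩
    · intro i a
      fin_cases i <;> fin_cases a <;>
        simp only [Fin.zero_eta, Fin.mk_one, Fin.reduceFinMk, Matrix.cons_val_zero,
          Matrix.cons_val_one, Matrix.head_cons, Matrix.cons_val_two, Matrix.tail_cons,
          _root_.map_one, norm_one, habz]
      · exact habs2 _ (hns 1 (by decide) 0 0)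
      · exact habs2 _ (hns 1 (by decide) 1 0)
      · exact habs2 _ (hns 2 (by decide) 0 0)
      · exact habs2 _ (hns 2 (by decide) 1 0)
    · intro i a
      fin_cases i <;> fin_cases a <;> funext x <;>
        simp only [Fin.zero_eta, Fin.mk_one, Fin.reduceFinMk, Equiv.refl_apply, Pi.smul_apply,
          smul_eq_mul, pauliZXY, Matrix.cons_val_zero, Matrix.cons_val_one, Matrix.head_cons,
          Matrix.cons_val_two, Matrix.tail_cons, Fin.isValue, ← hs_def]
      · -- M 0 0
        rw [hWmul]; simp
      · rw [hWmul]; try simp only [Matrix.cons_val_zero, Matrix.cons_val_one, Matrix.head_cons]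
        linear_combination (-(M 0 1 x)) * hzz
      · rw [hWmul, hexp 1 0 x]
        try simp only [Matrix.cons_val_zero, Matrix.cons_val_one, Matrix.head_cons]
        field_simp
        linear_combination M 0 1 x * hz
      · rw [hWmul, hexp 1 1 x]
        try simp only [Matrix.cons_val_zero, Matrix.cons_val_one, Matrix.head_cons]
        field_simp
        linear_combination M 0 1 x * hc111
      · rw [hWmul, hexp 2 0 x]
        try simp only [Matrix.cons_val_zero, Matrix.cons_val_one, Matrix.head_cons]
        field_simp
        linear_combination M 0 1 x * hc201
      · rw [hWmul, hexp 2 1 x]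
        try simp only [Matrix.cons_val_zero, Matrix.cons_val_one, Matrix.head_cons]
        field_simp
        linear_combination M 0 1 x * hc211
  case inr =>
    have hc201 : c 2 0 1 = -(Complex.I * c 2 0 0 * z) := by
      linear_combination z * hE - c 2 0 1 * hzz
    have hsc201 : (starRingEnd ℂ) (c 2 0 1)
        = Complex.I * (starRingEnd ℂ) (c 2 0 0) * (starRingEnd ℂ) z := by
      rw [hc201]; simp only [_root_.map_mul, map_neg, Complex.conj_I]; ring
    have hc211 : c 2 1 1 = Complex.I * c 2 1 0 * z := by
      apply mul_left_cancel₀ hsc200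
      rw [hsc201] at o2
      linear_combination (-(Complex.I * z)) * o2
        + (z * (starRingEnd ℂ) z * (starRingEnd ℂ) (c 2 0 0) * c 2 1 1) * Complex.I_mul_I
        - ((starRingEnd ℂ) (c 2 0 0) * c 2 1 1) * hzz
    refine ⟨W, hWu, Equiv.refl _,
      ![Equiv.refl (Fin 2), Equiv.refl (Fin 2), Equiv.swap 0 1],
      ![![1, (starRingEnd ℂ) z], ![c 1 0 0 * s, c 1 1 0 * s], ![c 2 0 0 * s, c 2 1 0 * s]],
      ?_, ?_⟩
    · intro i a
      fin_cases i <;> fin_cases a <;>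
        simp only [Fin.zero_eta, Fin.mk_one, Fin.reduceFinMk, Matrix.cons_val_zero,
          Matrix.cons_val_one, Matrix.head_cons, Matrix.cons_val_two, Matrix.tail_cons,
          _root_.map_one, norm_one, habz]
      · exact habs2 _ (hns 1 (by decide) 0 0)
      · exact habs2 _ (hns 1 (by decide) 1 0)
      · exact habs2 _ (hns 2 (by decide) 0 0)
      · exact habs2 _ (hns 2 (by decide) 1 0)
    · intro i a
      fin_cases i <;> fin_cases a <;> funext x <;>
        simp only [Fin.zero_eta, Fin.mk_one, Fin.reduceFinMk, Equiv.refl_apply, Pi.smul_apply,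
          smul_eq_mul, pauliZXY, Matrix.cons_val_zero, Matrix.cons_val_one, Matrix.head_cons,
          Matrix.cons_val_two, Matrix.tail_cons, Fin.isValue, if_true, if_false,
          reduceIte, Equiv.swap_apply_left, Equiv.swap_apply_right, ← hs_def]
      · rw [hWmul]; simp
      · rw [hWmul]; try simp only [Matrix.cons_val_zero, Matrix.cons_val_one, Matrix.head_cons]
        linear_combination (-(M 0 1 x)) * hzz
      · rw [hWmul, hexp 1 0 x]
        try simp only [Matrix.cons_val_zero, Matrix.cons_val_one, Matrix.head_cons]
        field_simp
        linear_combination M 0 1 x * hz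
      · rw [hWmul, hexp 1 1 x]
        try simp only [Matrix.cons_val_zero, Matrix.cons_val_one, Matrix.head_cons]
        field_simp
        linear_combination M 0 1 x * hc111
      · rw [hWmul, hexp 2 0 x]
        try simp only [Matrix.cons_val_zero, Matrix.cons_val_one, Matrix.head_cons]
        field_simp
        linear_combination M 0 1 x * hc201
      · rw [hWmul, hexp 2 1 x]
        try simp only [Matrix.cons_val_zero, Matrix.cons_val_one, Matrix.head_cons]
        field_simp
        linear_combination M 0 1 x * hc211
end
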